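/- Let R = ℂ⟦x,y⟧ with a local degree monomial ordering >. If I ⊆ R is an ideal with leading ideal L_>(I) = ⟨x², x·y², y³⟩ or L_>(I) = ⟨x², x·y, y²⟩, then I is not a complete intersection (cannot be generated by two elements forming a regular sequence). -/

import Mathlib

/- STATEMENT 1: In R = ℂ⟦x,y⟧ with a local degree ordering, if the leading
ideal of I is ⟨x², xy², y³⟩ or ⟨x², xy, y²⟩, then I is not a complete
intersection.  Having leading ideal J (w.r.t. a local degree ordering) is
encoded by its characterizing property used in the proof: the Hilbert–Samuel
functions of R/I and R/J coincide. -/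

noncomputable section

abbrev R2 : Type := MvPowerSeries (Fin 2) ℂ

noncomputable def Xv : R2 := MvPowerSeries.X 0
noncomputable def Yv : R2 := MvPowerSeries.X 1

/-- the maximal ideal ⟨x,y⟩ of ℂ⟦x,y⟧ -/
noncomputable def mR2 : Ideal R2 := Ideal.span {Xv, Yv}

namespace CIAux

open MvPowerSeries Finsupp

/-- total degree of an exponent vector -/
def deg (d : Fin 2 →₀ ℕ) : ℕ := d 0 + d 1

lemma deg_add (d e : Fin 2 →₀ ℕ) : deg (d + e) = deg d + deg e := by
  simp [deg, Finsupp.add_apply]; ring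

lemma deg_mono {d e : Fin 2 →₀ ℕ} (h : d ≤ e) : deg d ≤ deg e := by
  have h0 := (Finsupp.le_def.mp h) 0
  have h1 := (Finsupp.le_def.mp h) 1
  simp [deg]; omega

lemma deg_zero : deg 0 = 0 := by simp [deg]

lemma eq_zero_of_deg_lt_one {d : Fin 2 →₀ ℕ} (h : deg d < 1) : d = 0 := by
  have h0 : d 0 = 0 := by unfold deg at h; omega
  have h1 : d 1 = 0 := by unfold deg at h; omega
  ext i; fin_cases i <;> simp [h0, h1]

/-- the "staircase complement" ideal: series whose coefficients vanish on a
down-closed set `T` of exponents -/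
def ET (T : Set (Fin 2 →₀ ℕ)) (hT : ∀ ⦃d e : Fin 2 →₀ ℕ⦄, d ∈ T → e ≤ d → e ∈ T) :
    Ideal R2 where
  carrier := {f | ∀ d ∈ T, coeff d f = 0}
  add_mem' := by
    intro a b ha hb d hd
    rw [map_add, ha d hd, hb d hd, add_zero]
  zero_mem' := by intro d _; simp
  smul_mem' := by
    intro c f hf d hd
    rw [smul_eq_mul, coeff_mul]
    apply Finset.sum_eq_zero
    intro p hp
    rw [Finset.HasAntidiagonal.mem_antidiagonal] at hp
    have hle : p.2 ≤ d := hp ▸ le_add_self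
    rw [hf p.2 (hT hd hle), mul_zero]

lemma mem_ET {T hT} {f : R2} :
    f ∈ ET T hT ↔ ∀ d ∈ T, coeff d f = 0 := Iff.rfl

/-- the ideal of series of order at least `n` -/
def On (n : ℕ) : Ideal R2 :=
  ET {d | deg d < n} (fun _ e hd he => lt_of_le_of_lt (deg_mono he) hd)

lemma mem_On {n : ℕ} {f : R2} : f ∈ On n ↔ ∀ d, deg d < n → coeff d f = 0 := Iff.rfl

lemma On_mono {a b : ℕ} (h : a ≤ b) : On b ≤ On a := by
  intro f hf d hd
  exact hf d (lt_of_lt_of_le hd h)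

lemma mul_mem_On {a b : ℕ} {f g : R2} (hf : f ∈ On a) (hg : g ∈ On b) :
    f * g ∈ On (a + b) := by
  rw [mem_On] at hf hg ⊢
  intro d hd
  rw [coeff_mul]
  apply Finset.sum_eq_zero
  intro p hp
  rw [Finset.HasAntidiagonal.mem_antidiagonal] at hp
  have hdeg : deg p.1 + deg p.2 < a + b := by rw [← deg_add, hp]; exact hd
  rcases lt_or_ge (deg p.1) a with h1 | h1
  · rw [hf p.1 h1, zero_mul]
  · rw [hg p.2 (by omega), mul_zero]

lemma X_mem_On1 (i : Fin 2) : (X i : R2) ∈ On 1 := by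
  rw [mem_On]
  intro d hd
  rw [eq_zero_of_deg_lt_one hd, coeff_zero_eq_constantCoeff]
  exact constantCoeff_X i

lemma mR2_le_On1 : mR2 ≤ On 1 := by
  rw [mR2, Ideal.span_le]
  rintro x (rfl | rfl)
  · exact X_mem_On1 0
  · exact X_mem_On1 1

lemma pow_le_On (n : ℕ) : mR2 ^ n ≤ On n := by
  induction n with
  | zero =>
    intro f _
    rw [mem_On]; intro d hd; exact absurd hd (by omega)
  | succ n ih =>
    rw [pow_succ, Ideal.mul_le]
    intro r hr s hs
    exact mul_mem_On (ih hr) (mR2_le_On1 hs)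

/-- division step: a series with vanishing constant term is in `(x) + (y)` -/
lemma decompose (f : R2) (h0 : coeff 0 f = 0) :
    ∃ f₁ f₂ : R2, f = X 0 * f₁ + X 1 * f₂ ∧
      (∀ d, coeff d f₁ = coeff (d + single 0 1) f) ∧
      (∀ d, coeff d f₂ = if d 0 = 0 then coeff (d + single 1 1) f else 0) := by
  classical
  let f₁ : R2 := fun e => coeff (e + single 0 1) f
  let f₂ : R2 := fun e => if e 0 = 0 then coeff (e + single 1 1) f else 0
  have hc1 : ∀ d, coeff d f₁ = coeff (d + single 0 1) f := fun d => rfl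
  have hc2 : ∀ d, coeff d f₂ = if d 0 = 0 then coeff (d + single 1 1) f else 0 :=
    fun d => rfl
  refine ⟨f₁, f₂, ?_, hc1, hc2⟩
  ext d
  rw [map_add, X_def, X_def, coeff_monomial_mul, coeff_monomial_mul]
  have h3 : (d - single 1 1 : Fin 2 →₀ ℕ) 0 = d 0 := by
    rw [Finsupp.tsub_apply]
    simp [Finsupp.single_apply]
  by_cases h1 : (1 : ℕ) ≤ d 0
  · rw [if_pos (Finsupp.single_le_iff.mpr h1), hc1,
      tsub_add_cancel_of_le (Finsupp.single_le_iff.mpr h1), one_mul]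
    by_cases h2 : single (1 : Fin 2) 1 ≤ d
    · rw [if_pos h2, hc2, if_neg (by rw [h3]; omega), mul_zero, add_zero]
    · rw [if_neg h2, add_zero]
  · rw [if_neg (fun hc => h1 (Finsupp.single_le_iff.mp hc))]
    by_cases h2 : (1 : ℕ) ≤ d 1
    · rw [if_pos (Finsupp.single_le_iff.mpr h2), hc2, if_pos (by rw [h3]; omega),
        tsub_add_cancel_of_le (Finsupp.single_le_iff.mpr h2), one_mul, zero_add]
    · rw [if_neg (fun hc => h2 (Finsupp.single_le_iff.mp hc))]
      have hd0 : d = 0 := by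
        ext i
        fin_cases i <;> simp <;> omega
      rw [hd0, zero_add]
      exact h0

lemma On_le_pow (n : ℕ) : On n ≤ mR2 ^ n := by
  induction n with
  | zero => simp
  | succ n ih =>
    intro f hf
    rw [mem_On] at hf
    have h0 : coeff 0 f = 0 := hf 0 (by simp [deg_zero])
    obtain ⟨f₁, f₂, heq, hc1, hc2⟩ := decompose f h0
    have hf₁ : f₁ ∈ On n := by
      rw [mem_On]; intro d hd
      rw [hc1 d]
      apply hf
      rw [deg_add]
      have : deg (single (0:Fin 2) 1) = 1 := by simp [deg, Finsupp.single_apply]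
      omega
    have hf₂ : f₂ ∈ On n := by
      rw [mem_On]; intro d hd
      rw [hc2 d]
      split
      · apply hf
        rw [deg_add]
        have : deg (single (1:Fin 2) 1) = 1 := by simp [deg, Finsupp.single_apply]
        omega
      · rfl
    have hX0 : (X 0 : R2) ∈ mR2 := Ideal.subset_span (by left; rfl)
    have hX1 : (X 1 : R2) ∈ mR2 := Ideal.subset_span (by right; rfl)
    rw [heq, pow_succ]
    exact Ideal.add_mem _ (mul_comm (X 0) f₁ ▸ Ideal.mul_mem_mul (ih hf₁) hX0)
      (mul_comm (X 1) f₂ ▸ Ideal.mul_mem_mul (ih hf₂) hX1)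

lemma pow_eq_On (n : ℕ) : mR2 ^ n = On n := le_antisymm (pow_le_On n) (On_le_pow n)

/-! ### monomials -/

def mn (a b : ℕ) : Fin 2 →₀ ℕ := single 0 a + single 1 b

lemma mn_apply0 (a b : ℕ) : mn a b 0 = a := by simp [mn, Finsupp.single_apply]
lemma mn_apply1 (a b : ℕ) : mn a b 1 = b := by simp [mn, Finsupp.single_apply]

lemma eq_mn (d : Fin 2 →₀ ℕ) : d = mn (d 0) (d 1) := by
  ext i; fin_cases i <;> simp [mn, Finsupp.single_apply]

lemma deg_mn (a b : ℕ) : deg (mn a b) = a + b := by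
  simp [deg, mn_apply0, mn_apply1]

lemma mn_inj {a b c d : ℕ} : mn a b = mn c d ↔ a = c ∧ b = d := by
  constructor
  · intro h
    constructor
    · have := congrArg (fun e => e 0) h; simpa [mn_apply0] using this
    · have := congrArg (fun e => e 1) h; simpa [mn_apply1] using this
  · rintro ⟨rfl, rfl⟩; rfl

lemma mn_injective : Function.Injective (fun p : ℕ × ℕ => mn p.1 p.2) := by
  rintro ⟨a, b⟩ ⟨c, d⟩ h
  simp only [mn_inj] at h
  exact Prod.ext h.1 h.2

lemma Xv_pow_mul_Yv_pow (a b : ℕ) : Xv ^ a * Yv ^ b = monomial (mn a b) 1 := by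
  rw [Xv, Yv, X_pow_eq, X_pow_eq, monomial_mul_monomial, one_mul, mn]

lemma Xv_sq : Xv ^ 2 = monomial (mn 2 0) 1 := by
  have := Xv_pow_mul_Yv_pow 2 0; simpa using this

lemma Xv_cube : Xv ^ 3 = monomial (mn 3 0) 1 := by
  have := Xv_pow_mul_Yv_pow 3 0; simpa using this

lemma XvYv : Xv * Yv = monomial (mn 1 1) 1 := by
  have := Xv_pow_mul_Yv_pow 1 1; simpa using this

lemma Yv_sq : Yv ^ 2 = monomial (mn 0 2) 1 := by
  have := Xv_pow_mul_Yv_pow 0 2; simpa using this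

lemma XvYv_sq : Xv * Yv ^ 2 = monomial (mn 1 2) 1 := by
  have := Xv_pow_mul_Yv_pow 1 2; simpa using this

lemma Yv_cube : Yv ^ 3 = monomial (mn 0 3) 1 := by
  have := Xv_pow_mul_Yv_pow 0 3; simpa using this

lemma Xv_sq_Yv : Xv ^ 2 * Yv = monomial (mn 2 1) 1 := by
  have := Xv_pow_mul_Yv_pow 2 1; simpa using this

lemma monomial_mem_On {e : Fin 2 →₀ ℕ} {n : ℕ} (h : n ≤ deg e) :
    monomial e 1 ∈ On n := by
  rw [mem_On]
  intro d hd
  rw [coeff_monomial, if_neg]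
  rintro rfl
  omega

/-! ### finite staircases and quotient bases -/

def Fn (n : ℕ) : Finset (Fin 2 →₀ ℕ) :=
  ((Finset.range n ×ˢ Finset.range n).filter (fun p => p.1 + p.2 < n)).image
    (fun p => mn p.1 p.2)

lemma mem_Fn {n : ℕ} {d : Fin 2 →₀ ℕ} : d ∈ Fn n ↔ deg d < n := by
  constructor
  · intro h
    obtain ⟨p, hp, rfl⟩ := Finset.mem_image.mp h
    rw [Finset.mem_filter] at hp
    rw [deg_mn]
    exact hp.2
  · intro h
    apply Finset.mem_image.mpr
    refine ⟨(d 0, d 1), ?_, (eq_mn d).symm⟩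
    rw [Finset.mem_filter, Finset.mem_product, Finset.mem_range, Finset.mem_range]
    unfold deg at h
    exact ⟨⟨by omega, by omega⟩, by omega⟩

lemma card_Fn (n : ℕ) :
    (Fn n).card = ((Finset.range n ×ˢ Finset.range n).filter (fun p => p.1 + p.2 < n)).card :=
  Finset.card_image_of_injective _ mn_injective

lemma card_Fn2 : (Fn 2).card = 3 := by rw [card_Fn]; decide
lemma card_Fn3 : (Fn 3).card = 6 := by rw [card_Fn]; decide
lemma card_Fn4 : (Fn 4).card = 10 := by rw [card_Fn]; decide

def F5 : Finset (Fin 2 →₀ ℕ) :=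
  ((Finset.range 3 ×ˢ Finset.range 3).filter (fun p => p.1 + p.2 < 3 ∧ p.1 ≤ 1)).image
    (fun p => mn p.1 p.2)

lemma mem_F5 {d : Fin 2 →₀ ℕ} : d ∈ F5 ↔ deg d < 3 ∧ d 0 ≤ 1 := by
  constructor
  · intro h
    obtain ⟨p, hp, rfl⟩ := Finset.mem_image.mp h
    rw [Finset.mem_filter] at hp
    rw [deg_mn, mn_apply0]
    exact hp.2
  · intro h
    apply Finset.mem_image.mpr
    refine ⟨(d 0, d 1), ?_, (eq_mn d).symm⟩
    rw [Finset.mem_filter, Finset.mem_product, Finset.mem_range, Finset.mem_range]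
    unfold deg at h
    exact ⟨⟨by omega, by omega⟩, by omega, by omega⟩

lemma card_F5 : F5.card = 5 := by
  rw [F5, Finset.card_image_of_injective _ mn_injective]; decide

/-- the ideal with staircase `{1, x, y, xy, y²}` (equals `(x²,xy²,y³)`) -/
def E5 : Ideal R2 :=
  ET {d | deg d < 3 ∧ d 0 ≤ 1}
    (fun d e hd he => ⟨lt_of_le_of_lt (deg_mono he) hd.1,
      le_trans ((Finsupp.le_def.mp he) 0) hd.2⟩)

lemma mem_E5 {f : R2} : f ∈ E5 ↔ ∀ d, deg d < 3 ∧ d 0 ≤ 1 → coeff d f = 0 := by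
  rw [E5, mem_ET]; simp

lemma coeff_sub_sum (f : R2) (U : Finset (Fin 2 →₀ ℕ)) (e : Fin 2 →₀ ℕ) :
    coeff e (f - ∑ d ∈ U, coeff d f • monomial d 1) =
      if e ∈ U then 0 else coeff e f := by
  classical
  rw [map_sub, map_sum]
  have hsum : (∑ d ∈ U, coeff e (coeff d f • monomial d 1)) =
      if e ∈ U then coeff e f else 0 := by
    rw [← Finset.sum_ite_eq' U e (fun d => coeff d f)]
    apply Finset.sum_congr rfl
    intro d _
    rw [map_smul, smul_eq_mul, coeff_monomial]
    by_cases h : d = e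
    · subst h; simp
    · rw [if_neg h, if_neg (Ne.symm h), mul_zero]
  rw [hsum]
  split <;> simp

/-- the master decomposition lemma -/
lemma sub_sum_mem_On {n : ℕ} (U : Finset (Fin 2 →₀ ℕ)) (f : R2)
    (h : ∀ d, deg d < n → coeff d f ≠ 0 → d ∈ U) :
    f - ∑ d ∈ U, coeff d f • monomial d 1 ∈ On n := by
  rw [mem_On]
  intro e he
  rw [coeff_sub_sum]
  split
  · rfl
  · next hne =>
    by_contra hc
    exact hne (h e he hc)

/-- quotients by staircase ideals are finite dimensional of dimension the
cardinality of the staircase -/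
lemma quot_struct (K : Ideal R2) (T : Finset (Fin 2 →₀ ℕ))
    (hK : ∀ f : R2, f ∈ K ↔ ∀ d ∈ T, coeff d f = 0) :
    FiniteDimensional ℂ (R2 ⧸ K) ∧ Module.finrank ℂ (R2 ⧸ K) = T.card := by
  classical
  set φ := (Ideal.Quotient.mkₐ ℂ K).toLinearMap with hφ
  have hφapp : ∀ x : R2, φ x = Ideal.Quotient.mk K x := fun x => rfl
  set v : {x // x ∈ T} → R2 ⧸ K := fun d => Ideal.Quotient.mk K (monomial (↑d) 1) with hv
  have hli : LinearIndependent ℂ v := by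
    rw [Fintype.linearIndependent_iff]
    intro g hg i
    have hF : (∑ j : {x // x ∈ T}, g j • monomial (↑j : Fin 2 →₀ ℕ) 1) ∈ K := by
      rw [← Ideal.Quotient.eq_zero_iff_mem, ← hφapp, map_sum]
      simp only [map_smul]
      exact hg
    have := (hK _).mp hF (↑i) i.2
    rw [map_sum] at this
    have hsum : (∑ j : {x // x ∈ T}, coeff (↑i : Fin 2 →₀ ℕ) (g j • monomial (↑j : Fin 2 →₀ ℕ) 1)) = g i := by
      rw [Finset.sum_eq_single i]
      · rw [map_smul, smul_eq_mul, coeff_monomial, if_pos rfl, mul_one]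
      · intro j _ hji
        rw [map_smul, smul_eq_mul, coeff_monomial, if_neg, mul_zero]
        intro hc
        exact hji (Subtype.ext hc).symm
      · intro h; exact absurd (Finset.mem_univ i) h
    rw [hsum] at this
    exact this
  have hsp : ⊤ ≤ Submodule.span ℂ (Set.range v) := by
    intro x _
    obtain ⟨f, rfl⟩ := Ideal.Quotient.mk_surjective x
    have hmem : f - ∑ d ∈ T, coeff d f • monomial d 1 ∈ K := by
      rw [hK]
      intro d hd
      rw [coeff_sub_sum, if_pos hd]
    have heq : Ideal.Quotient.mk K f =
        Ideal.Quotient.mk K (∑ d ∈ T, coeff d f • monomial d 1) :=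
      Ideal.Quotient.eq.mpr hmem
    rw [heq, ← hφapp, map_sum]
    apply Submodule.sum_mem
    intro d hd
    rw [map_smul]
    apply Submodule.smul_mem
    apply Submodule.subset_span
    exact ⟨⟨d, hd⟩, by rw [hv, hφapp]⟩
  let b : Module.Basis {x // x ∈ T} ℂ (R2 ⧸ K) := Module.Basis.mk hli hsp
  refine ⟨Module.Finite.of_basis b, ?_⟩
  rw [Module.finrank_eq_card_basis b, Fintype.card_coe]

lemma On_descr (n : ℕ) : ∀ f : R2, f ∈ On n ↔ ∀ d ∈ Fn n, coeff d f = 0 := by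
  intro f
  rw [mem_On]
  constructor
  · intro h d hd; exact h d (mem_Fn.mp hd)
  · intro h d hd; exact h d (mem_Fn.mpr hd)

lemma E5_descr : ∀ f : R2, f ∈ E5 ↔ ∀ d ∈ F5, coeff d f = 0 := by
  intro f
  rw [mem_E5]
  constructor
  · intro h d hd; exact h d (mem_F5.mp hd)
  · intro h d hd; exact h d (mem_F5.mpr hd)

lemma FD_On (n : ℕ) : FiniteDimensional ℂ (R2 ⧸ On n) :=
  (quot_struct (On n) (Fn n) (On_descr n)).1

lemma finrank_On (n : ℕ) : Module.finrank ℂ (R2 ⧸ On n) = (Fn n).card :=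
  (quot_struct (On n) (Fn n) (On_descr n)).2

/-! ### rank-nullity for quotients -/

set_option maxHeartbeats 2000000 in
set_option synthInstance.maxHeartbeats 2000000 in
lemma RN (n : ℕ) (K : Ideal R2) (hK : On n ≤ K) :
    Module.finrank ℂ (R2 ⧸ K) +
      Module.finrank ℂ ((K.map (Ideal.Quotient.mk (On n))).restrictScalars ℂ) =
      Module.finrank ℂ (R2 ⧸ On n) := by
  haveI := FD_On n
  set P : Ideal (R2 ⧸ On n) := K.map (Ideal.Quotient.mk (On n)) with hP
  have e1 : Module.finrank ℂ ((R2 ⧸ On n) ⧸ P.restrictScalars ℂ) +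
      Module.finrank ℂ (P.restrictScalars ℂ) = Module.finrank ℂ (R2 ⧸ On n) :=
    Submodule.finrank_quotient_add_finrank (P.restrictScalars ℂ)
  have e2 : Module.finrank ℂ ((R2 ⧸ On n) ⧸ P.restrictScalars ℂ) =
      Module.finrank ℂ (R2 ⧸ K) := by
    have eq1 : ((R2 ⧸ On n) ⧸ P.restrictScalars ℂ) ≃ₗ[ℂ] ((R2 ⧸ On n) ⧸ P) :=
      Submodule.Quotient.restrictScalarsEquiv ℂ P
    have eq2 : ((R2 ⧸ On n) ⧸ K.map (Ideal.Quotient.mkₐ ℂ (On n))) ≃ₐ[ℂ] R2 ⧸ K := by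
      have := DoubleQuot.quotQuotEquivQuotSupₐ ℂ (On n) K
      rwa [sup_eq_right.mpr hK] at this
    have hmk : K.map (Ideal.Quotient.mkₐ ℂ (On n)) = P := by
      rw [hP]
      simp only [Ideal.map, Ideal.Quotient.mkₐ_eq_mk]
    rw [hmk] at eq2
    rw [eq1.finrank_eq, eq2.toLinearEquiv.finrank_eq]
  rw [e2] at e1
  exact e1

lemma mem_image_quot {n : ℕ} {K : Ideal R2} {y : R2 ⧸ On n}
    (hy : y ∈ (K.map (Ideal.Quotient.mk (On n))).restrictScalars ℂ) :
    ∃ x ∈ K, Ideal.Quotient.mk (On n) x = y := by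
  have : y ∈ K.map (Ideal.Quotient.mk (On n)) := hy
  obtain ⟨x, hx, hxy⟩ :=
    (Ideal.mem_map_iff_of_surjective _ Ideal.Quotient.mk_surjective).mp this
  exact ⟨x, hx, hxy⟩

lemma finrank_image_le {n : ℕ} (K : Ideal R2) (S : Finset (R2 ⧸ On n))
    (h : ∀ x ∈ K, Ideal.Quotient.mk (On n) x ∈ Submodule.span ℂ (S : Set (R2 ⧸ On n))) :
    Module.finrank ℂ ((K.map (Ideal.Quotient.mk (On n))).restrictScalars ℂ) ≤ S.card := by
  haveI := FD_On n
  have h1 : (K.map (Ideal.Quotient.mk (On n))).restrictScalars ℂ ≤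
      Submodule.span ℂ (S : Set (R2 ⧸ On n)) := by
    intro y hy
    obtain ⟨x, hx, rfl⟩ := mem_image_quot hy
    exact h x hx
  calc Module.finrank ℂ ((K.map (Ideal.Quotient.mk (On n))).restrictScalars ℂ)
      ≤ Module.finrank ℂ (Submodule.span ℂ (S : Set (R2 ⧸ On n))) := Submodule.finrank_mono h1
    _ ≤ S.card := finrank_span_finset_le_card S

/-! ### enumeration lemmas -/

lemma cases_lt2 (a b : ℕ) (h : a + b < 2) :
    mn a b = mn 0 0 ∨ mn a b = mn 1 0 ∨ mn a b = mn 0 1 := by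
  have : (a = 0 ∧ b = 0) ∨ (a = 1 ∧ b = 0) ∨ (a = 0 ∧ b = 1) := by omega
  rcases this with ⟨rfl, rfl⟩ | ⟨rfl, rfl⟩ | ⟨rfl, rfl⟩
  · left; rfl
  · right; left; rfl
  · right; right; rfl

lemma cases_eq2 (a b : ℕ) (h : a + b = 2) :
    mn a b = mn 2 0 ∨ mn a b = mn 1 1 ∨ mn a b = mn 0 2 := by
  have : (a = 2 ∧ b = 0) ∨ (a = 1 ∧ b = 1) ∨ (a = 0 ∧ b = 2) := by omega
  rcases this with ⟨rfl, rfl⟩ | ⟨rfl, rfl⟩ | ⟨rfl, rfl⟩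
  · left; rfl
  · right; left; rfl
  · right; right; rfl

lemma cases_E5c (a b : ℕ) (h : a + b < 4) (h2 : ¬(a + b < 3 ∧ a ≤ 1)) :
    mn a b = mn 2 0 ∨ mn a b = mn 3 0 ∨ mn a b = mn 2 1 ∨ mn a b = mn 1 2 ∨
      mn a b = mn 0 3 := by
  have : (a = 2 ∧ b = 0) ∨ (a = 3 ∧ b = 0) ∨ (a = 2 ∧ b = 1) ∨ (a = 1 ∧ b = 2) ∨
      (a = 0 ∧ b = 3) := by omega
  rcases this with ⟨rfl, rfl⟩ | ⟨rfl, rfl⟩ | ⟨rfl, rfl⟩ | ⟨rfl, rfl⟩ | ⟨rfl, rfl⟩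
  · left; rfl
  · right; left; rfl
  · right; right; left; rfl
  · right; right; right; left; rfl
  · right; right; right; right; rfl

/-! ### ideal computations -/

def J1 : Ideal R2 := Ideal.span {Xv ^ 2, Xv * Yv ^ 2, Yv ^ 3}
def J2 : Ideal R2 := Ideal.span {Xv ^ 2, Xv * Yv, Yv ^ 2}

lemma J2_le_On2 : J2 ≤ On 2 := by
  rw [J2, Ideal.span_le]
  rintro x (rfl | rfl | rfl)
  · rw [Xv_sq]; exact monomial_mem_On (by rw [deg_mn])
  · rw [XvYv]; exact monomial_mem_On (by rw [deg_mn])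
  · rw [Yv_sq]; exact monomial_mem_On (by rw [deg_mn])

lemma J1_le_E5 : J1 ≤ E5 := by
  rw [J1, Ideal.span_le]
  rintro x (rfl | rfl | rfl)
  · rw [Xv_sq, SetLike.mem_coe, mem_E5]
    intro d hd
    rw [coeff_monomial, if_neg]
    rintro rfl
    rw [mn_apply0] at hd
    omega
  · rw [XvYv_sq, SetLike.mem_coe, mem_E5]
    intro d hd
    rw [coeff_monomial, if_neg]
    rintro rfl
    rw [deg_mn] at hd
    omega
  · rw [Yv_cube, SetLike.mem_coe, mem_E5]
    intro d hd
    rw [coeff_monomial, if_neg]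
    rintro rfl
    rw [deg_mn] at hd
    omega

lemma On3_le_E5 : On 3 ≤ E5 := by
  intro f hf
  rw [mem_E5]
  intro d hd
  exact hf d hd.1

lemma On2_le_J2_sup_On3 : On 2 ≤ J2 ⊔ On 3 := by
  classical
  intro f hf
  set U : Finset (Fin 2 →₀ ℕ) := {mn 2 0, mn 1 1, mn 0 2} with hU
  have hdec : f - ∑ d ∈ U, coeff d f • monomial d 1 ∈ On 3 := by
    apply sub_sum_mem_On
    intro d hd hne
    have h2 : ¬ deg d < 2 := fun hc => hne (hf d hc)
    have hdeq : deg d = 2 := by omega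
    have := cases_eq2 (d 0) (d 1) (by rw [← deg_mn]; rw [← eq_mn d]; exact hdeq)
    rw [← eq_mn d] at this
    rw [hU]
    simp only [Finset.mem_insert, Finset.mem_singleton]
    tauto
  have hsum : (∑ d ∈ U, coeff d f • monomial d 1) ∈ J2 := by
    apply Submodule.sum_mem
    intro d hd
    apply Submodule.smul_of_tower_mem
    rw [hU] at hd
    simp only [Finset.mem_insert, Finset.mem_singleton] at hd
    rcases hd with rfl | rfl | rfl
    · rw [← Xv_sq]; exact Ideal.subset_span (by left; rfl)
    · rw [← XvYv]; exact Ideal.subset_span (by right; left; rfl)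
    · rw [← Yv_sq]; exact Ideal.subset_span (by right; right; rfl)
  have : f = (∑ d ∈ U, coeff d f • monomial d 1) +
      (f - ∑ d ∈ U, coeff d f • monomial d 1) := by ring
  rw [this]
  exact Submodule.add_mem _ (Ideal.mem_sup_left hsum) (Ideal.mem_sup_right hdec)

lemma E5_le_J1_sup_On4 : E5 ≤ J1 ⊔ On 4 := by
  classical
  intro f hf
  rw [mem_E5] at hf
  set U : Finset (Fin 2 →₀ ℕ) := {mn 2 0, mn 3 0, mn 2 1, mn 1 2, mn 0 3} with hU
  have hdec : f - ∑ d ∈ U, coeff d f • monomial d 1 ∈ On 4 := by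
    apply sub_sum_mem_On
    intro d hd hne
    have h2 : ¬(deg d < 3 ∧ d 0 ≤ 1) := fun hc => hne (hf d hc)
    have hdd : deg d = d 0 + d 1 := rfl
    have hd' : d 0 + d 1 < 4 := by rw [← hdd]; exact hd
    have h2' : ¬(d 0 + d 1 < 3 ∧ d 0 ≤ 1) := by rw [← hdd]; exact h2
    have := cases_E5c (d 0) (d 1) hd' h2'
    rw [← eq_mn d] at this
    rw [hU]
    simp only [Finset.mem_insert, Finset.mem_singleton]
    tauto
  have hsum : (∑ d ∈ U, coeff d f • monomial d 1) ∈ J1 := by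
    apply Submodule.sum_mem
    intro d hd
    apply Submodule.smul_of_tower_mem
    rw [hU] at hd
    simp only [Finset.mem_insert, Finset.mem_singleton] at hd
    have hx2 : Xv ^ 2 ∈ J1 := Ideal.subset_span (by left; rfl)
    rcases hd with rfl | rfl | rfl | rfl | rfl
    · rw [← Xv_sq]; exact hx2
    · have h3 : (monomial (mn 3 0) 1 : R2) = Xv * Xv ^ 2 := by
        rw [← Xv_cube]; ring
      rw [h3]
      exact Ideal.mul_mem_left _ _ hx2
    · have h3 : (monomial (mn 2 1) 1 : R2) = Yv * Xv ^ 2 := by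
        rw [← Xv_sq_Yv]; ring
      rw [h3]
      exact Ideal.mul_mem_left _ _ hx2
    · rw [← XvYv_sq]; exact Ideal.subset_span (by right; left; rfl)
    · rw [← Yv_cube]; exact Ideal.subset_span (by right; right; rfl)
  have : f = (∑ d ∈ U, coeff d f • monomial d 1) +
      (f - ∑ d ∈ U, coeff d f • monomial d 1) := by ring
  rw [this]
  exact Submodule.add_mem _ (Ideal.mem_sup_left hsum) (Ideal.mem_sup_right hdec)

lemma J2_sup_On2 : J2 ⊔ On 2 = On 2 := sup_eq_right.mpr J2_le_On2

lemma J2_sup_On3 : J2 ⊔ On 3 = On 2 := by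
  apply le_antisymm
  · exact sup_le J2_le_On2 (On_mono (by omega))
  · exact On2_le_J2_sup_On3

lemma E5_le_On2 : E5 ≤ On 2 := by
  intro f hf
  rw [mem_On]
  intro d hd
  have hdd : deg d = d 0 + d 1 := rfl
  exact mem_E5.mp hf d ⟨by omega, by omega⟩

lemma J1_sup_On2 : J1 ⊔ On 2 = On 2 :=
  sup_eq_right.mpr (le_trans J1_le_E5 E5_le_On2)

lemma J1_sup_On3 : J1 ⊔ On 3 = E5 := by
  apply le_antisymm
  · exact sup_le J1_le_E5 On3_le_E5
  · exact le_trans E5_le_J1_sup_On4 (sup_le_sup_left (On_mono (by omega)) J1)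

lemma J1_sup_On4 : J1 ⊔ On 4 = E5 := by
  apply le_antisymm
  · exact sup_le J1_le_E5 (le_trans (On_mono (by omega)) On3_le_E5)
  · exact E5_le_J1_sup_On4

/-! ### constant/linear term manipulations -/

def Cc (c : ℂ) : R2 := MvPowerSeries.C c

lemma sub_C_mem_On1 (a : R2) : a - Cc (coeff 0 a) ∈ On 1 := by
  rw [mem_On]
  intro d hd
  rw [eq_zero_of_deg_lt_one hd, map_sub]
  simp [Cc, MvPowerSeries.coeff_zero_C]

lemma mk_C_mul (K : Ideal R2) (c : ℂ) (x : R2) :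
    Ideal.Quotient.mk K (Cc c * x) = c • Ideal.Quotient.mk K x := by
  rw [Cc]
  have : (MvPowerSeries.C c : R2) * x = c • x := by
    rw [Algebra.smul_def]; rfl
  rw [this, ← Ideal.Quotient.mkₐ_eq_mk ℂ K, map_smul]

lemma J1_eq_span : Ideal.span {Xv ^ 2, Xv * Yv ^ 2, Yv ^ 3} = J1 := rfl
lemma J2_eq_span : Ideal.span {Xv ^ 2, Xv * Yv, Yv ^ 2} = J2 := rfl

lemma FD_E5 : FiniteDimensional ℂ (R2 ⧸ E5) :=
  (quot_struct E5 F5 E5_descr).1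

lemma finrank_E5 : Module.finrank ℂ (R2 ⧸ E5) = 5 := by
  rw [(quot_struct E5 F5 E5_descr).2, card_F5]

lemma g_mem_pair (g h : R2) : g ∈ Ideal.span {g, h} :=
  Ideal.subset_span (Set.mem_insert _ _)

lemma h_mem_pair (g h : R2) : h ∈ Ideal.span {g, h} :=
  Ideal.subset_span (Set.mem_insert_of_mem _ rfl)

/-- from the Hilbert–Samuel value at level 2, the ideal is contained in m² -/
lemma le_On2_of_finrank (K : Ideal R2)
    (h : Module.finrank ℂ (R2 ⧸ (K ⊔ On 2)) = 3) : K ≤ On 2 := by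
  haveI := FD_On 2
  have hRN := RN 2 (K ⊔ On 2) le_sup_right
  rw [finrank_On 2, card_Fn2, h] at hRN
  have hV : ((K ⊔ On 2).map (Ideal.Quotient.mk (On 2))).restrictScalars ℂ = ⊥ :=
    Submodule.finrank_eq_zero.mp (by omega)
  intro x hx
  have hmk : Ideal.Quotient.mk (On 2) x ∈
      ((K ⊔ On 2).map (Ideal.Quotient.mk (On 2))).restrictScalars ℂ :=
    Ideal.mem_map_of_mem _ (Ideal.mem_sup_left hx)
  rw [hV, Submodule.mem_bot] at hmk
  exact Ideal.Quotient.eq_zero_iff_mem.mp hmk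

lemma mk_mul_of_mem {n k : ℕ} (hkn : 1 + k = n) (c u : R2) (hu : u ∈ On k) :
    Ideal.Quotient.mk (On n) (c * u) =
      (coeff 0 c) • Ideal.Quotient.mk (On n) u := by
  have h1 : c * u - Cc (coeff 0 c) * u ∈ On n := by
    have he : c * u - Cc (coeff 0 c) * u = (c - Cc (coeff 0 c)) * u := by ring
    rw [he, ← hkn]
    exact mul_mem_On (sub_C_mem_On1 c) hu
  calc Ideal.Quotient.mk (On n) (c * u)
      = Ideal.Quotient.mk (On n) (Cc (coeff 0 c) * u) := Ideal.Quotient.eq.mpr h1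
    _ = (coeff 0 c) • Ideal.Quotient.mk (On n) u := mk_C_mul _ _ _

lemma imageA (g h : R2) (hg : g ∈ On 2) (hh : h ∈ On 2) (x : R2)
    (hx : x ∈ Ideal.span {g, h} ⊔ On 3) :
    Ideal.Quotient.mk (On 3) x ∈
      Submodule.span ℂ
        {Ideal.Quotient.mk (On 3) g, Ideal.Quotient.mk (On 3) h} := by
  obtain ⟨y, hy, z, hz, rfl⟩ := Submodule.mem_sup.mp hx
  obtain ⟨a, b, rfl⟩ := Ideal.mem_span_pair.mp hy
  rw [map_add, map_add, mk_mul_of_mem rfl a g hg, mk_mul_of_mem rfl b h hh,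
    Ideal.Quotient.eq_zero_iff_mem.mpr hz, add_zero]
  exact Submodule.add_mem _
    (Submodule.smul_mem _ _ (Submodule.subset_span (Set.mem_insert _ _)))
    (Submodule.smul_mem _ _ (Submodule.subset_span (Set.mem_insert_of_mem _ rfl)))

lemma mn_zero_zero : mn 0 0 = 0 := by simp [mn]
lemma mn_one_zero : mn 1 0 = single 0 1 := by simp [mn]
lemma mn_zero_one : mn 0 1 = single 1 1 := by simp [mn]

/-- linear approximation: subtracting the constant and linear terms lands in m² -/
lemma lin_approx (a : R2) :
    a - Cc (coeff 0 a) - Cc (coeff (single 0 1) a) * Xv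
      - Cc (coeff (single 1 1) a) * Yv ∈ On 2 := by
  rw [mem_On]
  intro d hd
  have hdd : deg d = d 0 + d 1 := rfl
  have hcases := cases_lt2 (d 0) (d 1) (by omega)
  rw [← eq_mn d] at hcases
  have hs01 : (single (0:Fin 2) 1 : Fin 2 →₀ ℕ) ≠ 0 := by
    intro hc; exact one_ne_zero (Finsupp.single_eq_zero.mp hc)
  have hs11 : (single (1:Fin 2) 1 : Fin 2 →₀ ℕ) ≠ 0 := by
    intro hc; exact one_ne_zero (Finsupp.single_eq_zero.mp hc)
  have hs0111 : (single (0:Fin 2) 1 : Fin 2 →₀ ℕ) ≠ single 1 1 := by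
    intro hc
    have := congrArg (fun e => e 0) hc
    simp [Finsupp.single_apply] at this
  rcases hcases with h | h | h
  · rw [h, mn_zero_zero]
    simp only [map_sub, map_mul, coeff_zero_eq_constantCoeff, Cc, Xv, Yv]
    rw [constantCoeff_X, constantCoeff_X, constantCoeff_C]
    ring
  · rw [h, mn_one_zero]
    have e1 : coeff (single 0 1 : Fin 2 →₀ ℕ) (Cc (coeff 0 a)) = 0 := by
      rw [Cc, coeff_C, if_neg hs01]
    have e2 : coeff (single 0 1 : Fin 2 →₀ ℕ) (Cc (coeff (single 0 1) a) * Xv) =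
        coeff (single 0 1 : Fin 2 →₀ ℕ) a := by
      rw [Cc, Xv, coeff_C_mul, coeff_X, if_pos rfl, mul_one]
    have e3 : coeff (single 0 1 : Fin 2 →₀ ℕ) (Cc (coeff (single 1 1) a) * Yv) = 0 := by
      rw [Cc, Yv, coeff_C_mul, coeff_X, if_neg hs0111, mul_zero]
    rw [map_sub, map_sub, map_sub, e1, e2, e3]
    ring
  · rw [h, mn_zero_one]
    have e1 : coeff (single 1 1 : Fin 2 →₀ ℕ) (Cc (coeff 0 a)) = 0 := by
      rw [Cc, coeff_C, if_neg hs11]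
    have e2 : coeff (single 1 1 : Fin 2 →₀ ℕ) (Cc (coeff (single 0 1) a) * Xv) = 0 := by
      rw [Cc, Xv, coeff_C_mul, coeff_X, if_neg (fun hc => hs0111 hc.symm), mul_zero]
    have e3 : coeff (single 1 1 : Fin 2 →₀ ℕ) (Cc (coeff (single 1 1) a) * Yv) =
        coeff (single 1 1 : Fin 2 →₀ ℕ) a := by
      rw [Cc, Yv, coeff_C_mul, coeff_X, if_pos rfl, mul_one]
    rw [map_sub, map_sub, map_sub, e1, e2, e3]
    ring

lemma imageB (u v : R2) (hu : u ∈ On 2) (hv : v ∈ On 3) (x : R2)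
    (hx : x ∈ Ideal.span {u, v} ⊔ On 4) :
    Ideal.Quotient.mk (On 4) x ∈
      Submodule.span ℂ
        {Ideal.Quotient.mk (On 4) u, Ideal.Quotient.mk (On 4) (Xv * u),
         Ideal.Quotient.mk (On 4) (Yv * u), Ideal.Quotient.mk (On 4) v} := by
  obtain ⟨y, hy, z, hz, rfl⟩ := Submodule.mem_sup.mp hx
  obtain ⟨a, b, rfl⟩ := Ideal.mem_span_pair.mp hy
  set a0 := coeff 0 a
  set a1 := coeff (single 0 1) a
  set a2 := coeff (single 1 1) a
  have hau : a * u - (Cc a0 * u + Cc a1 * (Xv * u) + Cc a2 * (Yv * u)) ∈ On 4 := by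
    have he : a * u - (Cc a0 * u + Cc a1 * (Xv * u) + Cc a2 * (Yv * u)) =
        (a - Cc a0 - Cc a1 * Xv - Cc a2 * Yv) * u := by ring
    rw [he]
    exact mul_mem_On (lin_approx a) hu
  have h1 : Ideal.Quotient.mk (On 4) (a * u) =
      a0 • Ideal.Quotient.mk (On 4) u + a1 • Ideal.Quotient.mk (On 4) (Xv * u)
        + a2 • Ideal.Quotient.mk (On 4) (Yv * u) := by
    calc Ideal.Quotient.mk (On 4) (a * u)
        = Ideal.Quotient.mk (On 4) (Cc a0 * u + Cc a1 * (Xv * u) + Cc a2 * (Yv * u)) :=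
          Ideal.Quotient.eq.mpr hau
      _ = _ := by rw [map_add, map_add, mk_C_mul, mk_C_mul, mk_C_mul]
  rw [map_add, map_add, h1, mk_mul_of_mem rfl b v hv,
    Ideal.Quotient.eq_zero_iff_mem.mpr hz, add_zero]
  have m1 : Ideal.Quotient.mk (On 4) u ∈ ({Ideal.Quotient.mk (On 4) u,
      Ideal.Quotient.mk (On 4) (Xv * u), Ideal.Quotient.mk (On 4) (Yv * u),
      Ideal.Quotient.mk (On 4) v} : Set (R2 ⧸ On 4)) := Set.mem_insert _ _
  have m2 : Ideal.Quotient.mk (On 4) (Xv * u) ∈ ({Ideal.Quotient.mk (On 4) u,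
      Ideal.Quotient.mk (On 4) (Xv * u), Ideal.Quotient.mk (On 4) (Yv * u),
      Ideal.Quotient.mk (On 4) v} : Set (R2 ⧸ On 4)) :=
    Set.mem_insert_of_mem _ (Set.mem_insert _ _)
  have m3 : Ideal.Quotient.mk (On 4) (Yv * u) ∈ ({Ideal.Quotient.mk (On 4) u,
      Ideal.Quotient.mk (On 4) (Xv * u), Ideal.Quotient.mk (On 4) (Yv * u),
      Ideal.Quotient.mk (On 4) v} : Set (R2 ⧸ On 4)) :=
    Set.mem_insert_of_mem _ (Set.mem_insert_of_mem _ (Set.mem_insert _ _))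
  have m4 : Ideal.Quotient.mk (On 4) v ∈ ({Ideal.Quotient.mk (On 4) u,
      Ideal.Quotient.mk (On 4) (Xv * u), Ideal.Quotient.mk (On 4) (Yv * u),
      Ideal.Quotient.mk (On 4) v} : Set (R2 ⧸ On 4)) :=
    Set.mem_insert_of_mem _ (Set.mem_insert_of_mem _ (Set.mem_insert_of_mem _ rfl))
  exact Submodule.add_mem _
    (Submodule.add_mem _
      (Submodule.add_mem _
        (Submodule.smul_mem _ _ (Submodule.subset_span m1))
        (Submodule.smul_mem _ _ (Submodule.subset_span m2)))
      (Submodule.smul_mem _ _ (Submodule.subset_span m3)))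
    (Submodule.smul_mem _ _ (Submodule.subset_span m4))

/-- contradiction in the (x²,xy,y²) case -/
lemma contraJ2 (Iid : Ideal R2) (g h : R2) (hI : Iid = Ideal.span {g, h})
    (hIle : Iid ≤ On 2)
    (h3 : Module.finrank ℂ (R2 ⧸ (Iid ⊔ On 3)) = 3) : False := by
  classical
  haveI := FD_On 3
  have hg : g ∈ On 2 := hIle (hI ▸ g_mem_pair g h)
  have hh : h ∈ On 2 := hIle (hI ▸ h_mem_pair g h)
  have hRN := RN 3 (Iid ⊔ On 3) le_sup_right
  rw [finrank_On 3, card_Fn3, h3] at hRN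
  have hb := finrank_image_le (Iid ⊔ On 3)
    ({Ideal.Quotient.mk (On 3) g, Ideal.Quotient.mk (On 3) h} : Finset (R2 ⧸ On 3))
    (by
      intro x hx
      have := imageA g h hg hh x (by rw [← hI]; exact hx)
      refine Submodule.span_mono ?_ this
      intro w hw
      simpa using hw)
  have hcard : ({Ideal.Quotient.mk (On 3) g, Ideal.Quotient.mk (On 3) h} :
      Finset (R2 ⧸ On 3)).card ≤ 2 := by
    apply le_trans (Finset.card_insert_le _ _)
    simp
  omega

/-- contradiction in the (x²,xy²,y³) case, final step -/
lemma contraJ1 (u v : R2) (hu : u ∈ On 2) (hv : v ∈ On 3)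
    (h4 : Module.finrank ℂ (R2 ⧸ (Ideal.span {u, v} ⊔ On 4)) = 5) : False := by
  classical
  haveI := FD_On 4
  have hRN := RN 4 (Ideal.span {u, v} ⊔ On 4) le_sup_right
  rw [finrank_On 4, card_Fn4, h4] at hRN
  have hb := finrank_image_le (Ideal.span {u, v} ⊔ On 4)
    ({Ideal.Quotient.mk (On 4) u, Ideal.Quotient.mk (On 4) (Xv * u),
      Ideal.Quotient.mk (On 4) (Yv * u), Ideal.Quotient.mk (On 4) v} :
        Finset (R2 ⧸ On 4))
    (by
      intro x hx
      have := imageB u v hu hv x hx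
      refine Submodule.span_mono ?_ this
      intro w hw
      simpa using hw)
  have hcard : ({Ideal.Quotient.mk (On 4) u, Ideal.Quotient.mk (On 4) (Xv * u),
      Ideal.Quotient.mk (On 4) (Yv * u), Ideal.Quotient.mk (On 4) v} :
        Finset (R2 ⧸ On 4)).card ≤ 4 := by
    apply le_trans (Finset.card_insert_le _ _)
    have : ({Ideal.Quotient.mk (On 4) (Xv * u),
        Ideal.Quotient.mk (On 4) (Yv * u), Ideal.Quotient.mk (On 4) v} :
          Finset (R2 ⧸ On 4)).card ≤ 3 := by
      apply le_trans (Finset.card_insert_le _ _)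
      have : ({Ideal.Quotient.mk (On 4) (Yv * u), Ideal.Quotient.mk (On 4) v} :
          Finset (R2 ⧸ On 4)).card ≤ 2 := by
        apply le_trans (Finset.card_insert_le _ _)
        simp
      omega
    omega
  omega

/-- from the Hilbert–Samuel value at level 3 in the J1 case, the two generators
are linearly dependent modulo m³ -/
lemma get_dep (Iid : Ideal R2) (g h : R2) (hI : Iid = Ideal.span {g, h})
    (h3 : Module.finrank ℂ (R2 ⧸ (Iid ⊔ On 3)) = 5) :
    ∃ s t : ℂ, ¬(s = 0 ∧ t = 0) ∧ Cc s * g + Cc t * h ∈ On 3 := by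
  classical
  haveI := FD_On 3
  have hRN := RN 3 (Iid ⊔ On 3) le_sup_right
  rw [finrank_On 3, card_Fn3, h3] at hRN
  set V := ((Iid ⊔ On 3).map (Ideal.Quotient.mk (On 3))).restrictScalars ℂ with hV
  have hVfr : Module.finrank ℂ V = 1 := by omega
  have hnli : ¬ LinearIndependent ℂ
      ![Ideal.Quotient.mk (On 3) g, Ideal.Quotient.mk (On 3) h] := by
    intro hli
    have hsp : Submodule.span ℂ
        (Set.range ![Ideal.Quotient.mk (On 3) g, Ideal.Quotient.mk (On 3) h]) ≤ V := by
      rw [Submodule.span_le]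
      rintro w ⟨i, rfl⟩
      fin_cases i
      · show Ideal.Quotient.mk (On 3) g ∈ V
        exact Ideal.mem_map_of_mem _ (Ideal.mem_sup_left (hI ▸ g_mem_pair g h))
      · show Ideal.Quotient.mk (On 3) h ∈ V
        exact Ideal.mem_map_of_mem _ (Ideal.mem_sup_left (hI ▸ h_mem_pair g h))
    have h2le := Submodule.finrank_mono hsp
    have hfr2 : Module.finrank ℂ (Submodule.span ℂ
        (Set.range ![Ideal.Quotient.mk (On 3) g, Ideal.Quotient.mk (On 3) h])) = 2 := by
      have := finrank_span_eq_card hli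
      simpa using this
    rw [hfr2, hVfr] at h2le
    omega
  rw [LinearIndependent.pair_iff] at hnli
  push_neg at hnli
  obtain ⟨s, t, hst, hne⟩ := hnli
  refine ⟨s, t, by tauto, ?_⟩
  apply Ideal.Quotient.eq_zero_iff_mem.mp
  rw [map_add, mk_C_mul, mk_C_mul]
  exact hst

lemma span_replace (g h v : R2) (s t : ℂ) (ht : t ≠ 0)
    (hv : v = Cc s * g + Cc t * h) :
    Ideal.span {g, h} = Ideal.span {g, v} := by
  have hgm : g ∈ Ideal.span {g, v} := g_mem_pair _ _
  have hhm : h ∈ Ideal.span {g, v} := by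
    rw [Ideal.mem_span_pair]
    refine ⟨-(Cc t⁻¹ * Cc s), Cc t⁻¹, ?_⟩
    have hone : Cc t⁻¹ * Cc t = 1 := by
      rw [Cc, Cc, ← map_mul, inv_mul_cancel₀ ht, map_one]
    calc -(Cc t⁻¹ * Cc s) * g + Cc t⁻¹ * v
        = -(Cc t⁻¹ * Cc s) * g + Cc t⁻¹ * (Cc s * g + Cc t * h) := by rw [hv]
      _ = (Cc t⁻¹ * Cc t) * h := by ring
      _ = h := by rw [hone, one_mul]
  have hvm : v ∈ Ideal.span {g, h} := by
    rw [hv]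
    exact add_mem (Ideal.mul_mem_left _ _ (g_mem_pair g h))
      (Ideal.mul_mem_left _ _ (h_mem_pair g h))
  apply le_antisymm
  · apply Ideal.span_le.mpr
    intro x hx
    rcases Set.mem_insert_iff.mp hx with hx1 | hx2
    · rw [hx1]; exact SetLike.mem_coe.mpr hgm
    · rw [Set.mem_singleton_iff.mp hx2]; exact SetLike.mem_coe.mpr hhm
  · apply Ideal.span_le.mpr
    intro x hx
    rcases Set.mem_insert_iff.mp hx with hx1 | hx2
    · rw [hx1]; exact SetLike.mem_coe.mpr (g_mem_pair g h)
    · rw [Set.mem_singleton_iff.mp hx2]; exact SetLike.mem_coe.mpr hvm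

end CIAux

theorem statement1 (I J : Ideal R2)
    (hJ : J = Ideal.span {Xv ^ 2, Xv * Yv ^ 2, Yv ^ 3} ∨
          J = Ideal.span {Xv ^ 2, Xv * Yv, Yv ^ 2})
    (hLeading : ∀ n : ℕ,
      Module.finrank ℂ (R2 ⧸ (I ⊔ mR2 ^ n)) =
      Module.finrank ℂ (R2 ⧸ (J ⊔ mR2 ^ n))) :
    ¬ ∃ g h : R2, I = Ideal.span {g, h} ∧
        RingTheory.Sequence.IsRegular R2 [g, h] := by
  intro hex
  obtain ⟨g, h, hIgh, -⟩ := hex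
  rcases hJ with hJ1 | hJ2
  · -- the ⟨x², xy², y³⟩ case
    have h2 : Module.finrank ℂ (R2 ⧸ (I ⊔ CIAux.On 2)) = 3 := by
      have hl := hLeading 2
      rw [CIAux.pow_eq_On 2, hJ1, CIAux.J1_eq_span, CIAux.J1_sup_On2] at hl
      rw [hl, CIAux.finrank_On 2, CIAux.card_Fn2]
    have hIle : I ≤ CIAux.On 2 := CIAux.le_On2_of_finrank I h2
    have h3 : Module.finrank ℂ (R2 ⧸ (I ⊔ CIAux.On 3)) = 5 := by
      have hl := hLeading 3
      rw [CIAux.pow_eq_On 3, hJ1, CIAux.J1_eq_span, CIAux.J1_sup_On3] at hl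
      rw [hl, CIAux.finrank_E5]
    obtain ⟨s, t, hst, hv⟩ := CIAux.get_dep I g h hIgh h3
    have h4 : Module.finrank ℂ (R2 ⧸ (I ⊔ CIAux.On 4)) = 5 := by
      have hl := hLeading 4
      rw [CIAux.pow_eq_On 4, hJ1, CIAux.J1_eq_span, CIAux.J1_sup_On4] at hl
      rw [hl, CIAux.finrank_E5]
    by_cases htz : t = 0
    · have hs : s ≠ 0 := by tauto
      have hrepl : Ideal.span {h, g} =
          Ideal.span {h, CIAux.Cc s * g + CIAux.Cc t * h} :=
        CIAux.span_replace h g _ t s hs (by ring)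
      have hIeq : I = Ideal.span {h, CIAux.Cc s * g + CIAux.Cc t * h} := by
        rw [hIgh, Ideal.span_pair_comm, hrepl]
      apply CIAux.contraJ1 h (CIAux.Cc s * g + CIAux.Cc t * h)
        (hIle (hIgh ▸ CIAux.h_mem_pair g h)) hv
      rw [← hIeq]
      exact h4
    · have hrepl : Ideal.span {g, h} =
          Ideal.span {g, CIAux.Cc s * g + CIAux.Cc t * h} :=
        CIAux.span_replace g h _ s t htz rfl
      have hIeq : I = Ideal.span {g, CIAux.Cc s * g + CIAux.Cc t * h} := by
        rw [hIgh, hrepl]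
      apply CIAux.contraJ1 g (CIAux.Cc s * g + CIAux.Cc t * h)
        (hIle (hIgh ▸ CIAux.g_mem_pair g h)) hv
      rw [← hIeq]
      exact h4
  · -- the ⟨x², xy, y²⟩ case
    have h2 : Module.finrank ℂ (R2 ⧸ (I ⊔ CIAux.On 2)) = 3 := by
      have hl := hLeading 2
      rw [CIAux.pow_eq_On 2, hJ2, CIAux.J2_eq_span, CIAux.J2_sup_On2] at hl
      rw [hl, CIAux.finrank_On 2, CIAux.card_Fn2]
    have hIle : I ≤ CIAux.On 2 := CIAux.le_On2_of_finrank I h2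
    have h3 : Module.finrank ℂ (R2 ⧸ (I ⊔ CIAux.On 3)) = 3 := by
      have hl := hLeading 3
      rw [CIAux.pow_eq_On 3, hJ2, CIAux.J2_eq_span, CIAux.J2_sup_On3] at hl
      rw [hl, CIAux.finrank_On 2, CIAux.card_Fn2]
    exact CIAux.contraJ2 I g h hIgh hIle h3

end
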